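/- arXiv:2510.18194 — 3 statements merged into one kernel-verified Lean document; each statement's English description precedes it below -/
import Mathlib

section
/- Let ℓ be a prime and let G be a subgroup of the upper-triangular Borel subgroup of GL₂(𝔽_ℓ) whose order is divisible by ℓ. Then a subgroup H of G is normal in G if and only if either the unipotent matrix U = [[1,1],[0,1]] belongs to H, or every element [[a,b],[0,d]] of H satisfies a = d. -/
open Matrix

section
variable {ℓ : ℕ} [Fact ℓ.Prime]

abbrev R (ℓ : ℕ) := ZMod ℓ

def uu (c : ZMod ℓ) : GL (Fin 2) (ZMod ℓ) :=
  ⟨!![1, c; 0, 1], !![1, -c; 0, 1],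
    by simp [Matrix.mul_fin_two, Matrix.one_fin_two],
    by simp [Matrix.mul_fin_two, Matrix.one_fin_two]⟩

lemma uu_val (c : ZMod ℓ) : (uu c).val = !![1, c; 0, 1] := rfl

lemma uu_mul (c d : ZMod ℓ) : uu c * uu d = uu (c + d) := by
  ext : 1
  simp [uu, Units.val_mul, Matrix.mul_fin_two]
  ring_nf

lemma uu_pow (c : ZMod ℓ) (n : ℕ) : uu c ^ n = uu ((n : ZMod ℓ) * c) := by
  induction n with
  | zero => ext : 1; simp [uu, Matrix.one_fin_two]
  | succ k ih => rw [pow_succ, ih, uu_mul]; push_cast; ring_nf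

end
section
variable {ℓ : ℕ} [Fact ℓ.Prime]

lemma diag_ne (g : GL (Fin 2) (ZMod ℓ)) (hg : g.val 1 0 = 0) :
    g.val 0 0 ≠ 0 ∧ g.val 1 1 ≠ 0 := by
  have h1 : IsUnit (g.val.det) := (Matrix.isUnit_iff_isUnit_det _).1 ⟨g, rfl⟩
  rw [Matrix.det_fin_two, hg] at h1
  simp only [mul_zero, sub_zero, isUnit_iff_ne_zero, mul_ne_zero_iff] at h1
  exact h1

lemma inv_upper (g : GL (Fin 2) (ZMod ℓ)) (hg : g.val 1 0 = 0) :
    (g⁻¹).val = !![(g.val 0 0)⁻¹, -(g.val 0 1) * ((g.val 0 0)⁻¹ * (g.val 1 1)⁻¹);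
        0, (g.val 1 1)⁻¹] := by
  obtain ⟨ha, hd⟩ := diag_ne g hg
  apply Units.inv_eq_of_mul_eq_one_right
  nth_rewrite 1 [Matrix.eta_fin_two g.val]
  rw [hg, Matrix.mul_fin_two]
  ext i j
  fin_cases i <;> fin_cases j <;> simp [Matrix.one_fin_two] <;> field_simp <;> try ring

lemma pow_upper (M : Matrix (Fin 2) (Fin 2) (ZMod ℓ)) (hg : M 1 0 = 0) (n : ℕ) :
    (M ^ n) 1 0 = 0 ∧ (M ^ n) 0 0 = (M 0 0) ^ n ∧ (M ^ n) 1 1 = (M 1 1) ^ n := by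
  induction n with
  | zero => simp [Matrix.one_fin_two]
  | succ k ih =>
    obtain ⟨h1, h2, h3⟩ := ih
    refine ⟨?_, ?_, ?_⟩ <;>
      · rw [pow_succ, Matrix.mul_apply, Fin.sum_univ_two]
        simp [h1, h2, h3, hg, pow_succ]

lemma hpow (h : GL (Fin 2) (ZMod ℓ)) (a b : ZMod ℓ) (ha : a ≠ 0)
    (hval : h.val = !![a, b; 0, a]) (n : ℕ) :
    (h ^ n).val = !![a ^ n, (n : ZMod ℓ) * a ^ n * (b * a⁻¹); 0, a ^ n] := by
  induction n with
  | zero => simp [Matrix.one_fin_two]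
  | succ k ih =>
    rw [pow_succ, Units.val_mul, ih, hval, Matrix.mul_fin_two]
    ext i j
    fin_cases i <;> fin_cases j <;> push_cast <;> (try simp) <;> (try field_simp) <;> ring

end
section
variable {ℓ : ℕ} [Fact ℓ.Prime]

lemma mul_upper (x y : GL (Fin 2) (ZMod ℓ)) (hx : x.val 1 0 = 0) (hy : y.val 1 0 = 0) :
    (x * y).val 1 0 = 0 ∧ (x * y).val 0 0 = x.val 0 0 * y.val 0 0 ∧
      (x * y).val 1 1 = x.val 1 1 * y.val 1 1 := by
  refine ⟨?_, ?_, ?_⟩ <;> simp [Units.val_mul, Matrix.mul_apply, Fin.sum_univ_two, hx, hy]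

/-- From a nontrivial unipotent element we get `uu 1`. -/
lemma unip_mem (H : Subgroup (GL (Fin 2) (ZMod ℓ))) (v : GL (Fin 2) (ZMod ℓ))
    (hv : v ∈ H) (t : ZMod ℓ) (ht : t ≠ 0) (hval : v.val = !![1, t; 0, 1]) :
    uu (1 : ZMod ℓ) ∈ H := by
  have hvuu : v = uu t := Units.ext (by rw [hval]; rfl)
  have := H.pow_mem hv ((t⁻¹).val)
  rw [hvuu, uu_pow, ZMod.natCast_val, ZMod.cast_id, inv_mul_cancel₀ ht] at this
  exact this

/-- Equal diagonal, nonzero upper entry gives `uu 1`. -/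
lemma eqdiag_mem (H : Subgroup (GL (Fin 2) (ZMod ℓ))) (h : GL (Fin 2) (ZMod ℓ))
    (hh : h ∈ H) (h10 : h.val 1 0 = 0) (hd : h.val 0 0 = h.val 1 1)
    (hb : h.val 0 1 ≠ 0) : uu (1 : ZMod ℓ) ∈ H := by
  obtain ⟨ha, _⟩ := diag_ne h h10
  set a := h.val 0 0 with ha'
  set b := h.val 0 1 with hb'
  have hval : h.val = !![a, b; 0, a] := by
    rw [Matrix.eta_fin_two h.val, h10, ← ha', ← hb', ← hd]
  set c : ZMod ℓ := b * a⁻¹ with hc'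
  have hc : c ≠ 0 := mul_ne_zero hb (inv_ne_zero ha)
  set n : ℕ := (ℓ - 1) * (-(c⁻¹)).val with hn'
  have hl1 : ((ℓ - 1 : ℕ) : ZMod ℓ) = -1 := by
    have h2 : 1 ≤ ℓ := (Fact.out : ℓ.Prime).one_lt.le
    push_cast [Nat.cast_sub h2]
    simp
  have han : a ^ n = 1 := by
    rw [hn', pow_mul, ZMod.pow_card_sub_one_eq_one ha, one_pow]
  have hcn : ((n : ℕ) : ZMod ℓ) = c⁻¹ := by
    rw [hn']
    push_cast [ZMod.natCast_val, ZMod.cast_id]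
    rw [hl1]
    ring
  have := H.pow_mem hh n
  refine unip_mem H (h ^ n) this 1 one_ne_zero ?_
  rw [hpow h a b ha hval n, han, hcn, mul_one, ← hc', inv_mul_cancel₀ hc]

/-- If `uu 1 ∈ H` then `H` is normalized by `G`. -/
lemma normal_of_uu (G H : Subgroup (GL (Fin 2) (ZMod ℓ)))
    (hG : ∀ g ∈ G, (g : GL (Fin 2) (ZMod ℓ)).val 1 0 = 0) (hHG : H ≤ G)
    (hU : uu (1 : ZMod ℓ) ∈ H) :
    ∀ g ∈ G, ∀ h ∈ H, g * h * g⁻¹ ∈ H := by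
  have hall : ∀ c : ZMod ℓ, uu c ∈ H := by
    intro c
    have := H.pow_mem hU c.val
    rwa [uu_pow, mul_one, ZMod.natCast_val, ZMod.cast_id] at this
  intro g hg h hh
  have hg10 := hG g hg
  have hh10 := hG h (hHG hh)
  obtain ⟨hga, hgd⟩ := diag_ne g hg10
  obtain ⟨hha, hhd⟩ := diag_ne h hh10
  have hgi := inv_upper g hg10
  have hhi := inv_upper h hh10
  have hgi10 : (g⁻¹).val 1 0 = 0 := by rw [hgi]; simp
  have hhi10 : (h⁻¹).val 1 0 = 0 := by rw [hhi]; simp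
  have hgi00 : (g⁻¹).val 0 0 = (g.val 0 0)⁻¹ := by rw [hgi]; simp
  have hhi00 : (h⁻¹).val 0 0 = (h.val 0 0)⁻¹ := by rw [hhi]; simp
  have hgi11 : (g⁻¹).val 1 1 = (g.val 1 1)⁻¹ := by rw [hgi]; simp
  have hhi11 : (h⁻¹).val 1 1 = (h.val 1 1)⁻¹ := by rw [hhi]; simp
  set w := g * h * g⁻¹ * h⁻¹ with hw'
  obtain ⟨m11, m12, m13⟩ := mul_upper g h hg10 hh10
  obtain ⟨m21, m22, m23⟩ := mul_upper (g * h) g⁻¹ m11 hgi10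
  obtain ⟨m31, m32, m33⟩ := mul_upper (g * h * g⁻¹) h⁻¹ m21 hhi10
  have w10 : w.val 1 0 = 0 := m31
  have w00 : w.val 0 0 = 1 := by
    rw [hw', m32, m22, m12, hgi00, hhi00]; field_simp
  have w11 : w.val 1 1 = 1 := by
    rw [hw', m33, m23, m13, hgi11, hhi11]; field_simp
  have hwval : w.val = !![1, w.val 0 1; 0, 1] := by
    conv_lhs => rw [Matrix.eta_fin_two w.val]
    rw [w10, w00, w11]
  have hwmem : w ∈ H := by
    have : w = uu (w.val 0 1) := Units.ext (by rw [hwval]; rfl)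
    rw [this]; exact hall _
  have : w * h = g * h * g⁻¹ := by
    rw [hw', mul_assoc, inv_mul_cancel, mul_one]
  rw [← this]
  exact H.mul_mem hwmem hh

end

/-- Let `ℓ` be a prime and `G` a subgroup of the upper-triangular Borel
subgroup of `GL₂(𝔽_ℓ)` whose order is divisible by `ℓ`. A subgroup `H` of `G` is normal in `G`
iff either `U = !![1,1;0,1] ∈ H` or every element of `H` has equal diagonal entries. -/
theorem stmt0 (ℓ : ℕ) [Fact ℓ.Prime]
    (G : Subgroup (GL (Fin 2) (ZMod ℓ)))
    (hG : ∀ g ∈ G, (g : GL (Fin 2) (ZMod ℓ)).val 1 0 = 0)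
    (hord : ℓ ∣ Nat.card G)
    (H : Subgroup (GL (Fin 2) (ZMod ℓ))) (hHG : H ≤ G) :
    (∀ g ∈ G, ∀ h ∈ H, g * h * g⁻¹ ∈ H) ↔
      ((∃ u ∈ H, (u : GL (Fin 2) (ZMod ℓ)).val = !![1, 1; 0, 1]) ∨
        ∀ h ∈ H, (h : GL (Fin 2) (ZMod ℓ)).val 0 0 = (h : GL (Fin 2) (ZMod ℓ)).val 1 1) := by
  constructor
  · intro hnorm
    by_cases hdg : ∀ h ∈ H, (h : GL (Fin 2) (ZMod ℓ)).val 0 0 = (h : GL (Fin 2) (ZMod ℓ)).val 1 1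
    · exact Or.inr hdg
    left
    push_neg at hdg
    obtain ⟨h, hh, hps⟩ := hdg
    -- Cauchy: get an element of order ℓ in G
    haveI : Fintype G := Fintype.ofFinite G
    obtain ⟨g0, hg0⟩ := exists_prime_orderOf_dvd_card (G := G) ℓ
      (by rwa [← Nat.card_eq_fintype_card])
    set g : GL (Fin 2) (ZMod ℓ) := (g0 : GL (Fin 2) (ZMod ℓ)) with hgdef
    have hgG : g ∈ G := g0.2
    have hordg : orderOf g = ℓ :=
      (orderOf_injective G.subtype G.subtype_injective g0).trans hg0
    have hgl : g ^ ℓ = 1 := by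
      have := pow_orderOf_eq_one g
      rwa [hordg] at this
    have hg10 : g.val 1 0 = 0 := hG g hgG
    obtain ⟨hp0, hp1, hp2⟩ := pow_upper g.val hg10 ℓ
    have hvl : g.val ^ ℓ = 1 := by rw [← Units.val_pow_eq_pow_val, hgl, Units.val_one]
    rw [hvl] at hp1 hp2
    have ha : g.val 0 0 = 1 := by
      rw [← ZMod.pow_card (g.val 0 0), ← hp1, Matrix.one_apply_eq]
    have hd1 : g.val 1 1 = 1 := by
      rw [← ZMod.pow_card (g.val 1 1), ← hp2, Matrix.one_apply_eq]
    set c := g.val 0 1 with hc'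
    have hgval : g.val = !![1, c; 0, 1] := by
      conv_lhs => rw [Matrix.eta_fin_two g.val]
      rw [ha, hd1, hg10]
    have hc : c ≠ 0 := by
      intro h0
      have : g = 1 := Units.ext (by rw [hgval, h0, Units.val_one, Matrix.one_fin_two])
      rw [this, orderOf_one] at hordg
      exact (Fact.out : ℓ.Prime).one_lt.ne hordg
    have hguu : g = uu c := Units.ext (by rw [hgval]; rfl)
    have hh10 : h.val 1 0 = 0 := hG h (hHG hh)
    obtain ⟨hhp, hhs⟩ := diag_ne h hh10
    set v := g * h * g⁻¹ * h⁻¹ with hv'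
    have hvH : v ∈ H := H.mul_mem (hnorm g hgG h hh) (H.inv_mem hh)
    have e1 : (g⁻¹).val = !![1, -c; 0, 1] := by rw [hguu]; rfl
    have e2 := inv_upper h hh10
    have hvval : v.val = !![1, c * (h.val 1 1 - h.val 0 0) * (h.val 1 1)⁻¹; 0, 1] := by
      rw [hv', Units.val_mul, Units.val_mul, Units.val_mul, hgval, e1, e2,
        Matrix.eta_fin_two h.val, hh10]
      ext i j
      fin_cases i <;> fin_cases j <;>
        simp [Matrix.mul_apply, Fin.sum_univ_two] <;> field_simp <;> ring
    have ht : c * (h.val 1 1 - h.val 0 0) * (h.val 1 1)⁻¹ ≠ 0 :=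
      mul_ne_zero (mul_ne_zero hc (sub_ne_zero.mpr (Ne.symm hps))) (inv_ne_zero hhs)
    exact ⟨uu 1, unip_mem H v hvH _ ht hvval, rfl⟩
  · rintro (⟨u0, hu0H, hu0val⟩ | hdiag)
    · have hU : uu (1 : ZMod ℓ) ∈ H := by
        have : u0 = uu (1 : ZMod ℓ) := Units.ext (by rw [hu0val]; rfl)
        rwa [this] at hu0H
      exact normal_of_uu G H hG hHG hU
    · intro g hg h hh
      have hh10 : h.val 1 0 = 0 := hG h (hHG hh)
      have had : h.val 0 0 = h.val 1 1 := hdiag h hh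
      by_cases hb : h.val 0 1 = 0
      · -- h is scalar, hence central
        have hcomm : g * h = h * g := by
          refine Units.ext ?_
          rw [Units.val_mul, Units.val_mul]
          rw [Matrix.eta_fin_two h.val, hh10, hb, ← had, Matrix.eta_fin_two g.val,
            hG g hg, Matrix.mul_fin_two, Matrix.mul_fin_two]
          ext i j
          fin_cases i <;> fin_cases j <;> simp <;> ring
        have : g * h * g⁻¹ = h := by
          rw [hcomm, mul_assoc, mul_inv_cancel, mul_one]
        rwa [this]
      · have hU : uu (1 : ZMod ℓ) ∈ H := eqdiag_mem H h hh hh10 had hb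
        exact normal_of_uu G H hG hHG hU g hg h hh
end

section
/- Let ℓ be a prime, G a subgroup of the upper-triangular Borel subgroup of GL₂(𝔽_ℓ) with ℓ dividing |G|, and H a subgroup of G containing an element [[a,b],[0,d]] with a ≠ d. Then U = [[1,1],[0,1]] lies in the normal closure of H in G; in particular if H is normal in G then U ∈ H. -/
open Matrix

private lemma triu_pow {R : Type*} [CommRing R] (M : Matrix (Fin 2) (Fin 2) R)
    (h : M 1 0 = 0) (n : ℕ) :
    (M ^ n) 1 0 = 0 ∧ (M ^ n) 0 0 = (M 0 0) ^ n ∧ (M ^ n) 1 1 = (M 1 1) ^ n := by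
  induction n with
  | zero => simp
  | succ n ih =>
    obtain ⟨h1, h2, h3⟩ := ih
    refine ⟨?_, ?_, ?_⟩ <;>
      simp [pow_succ, Matrix.mul_apply, Fin.sum_univ_two, h, h1, h2, h3]

private lemma unip_pow {R : Type*} [CommRing R] (s : R) (n : ℕ) :
    (!![1, s; 0, 1] : Matrix (Fin 2) (Fin 2) R) ^ n = !![1, n * s; 0, 1] := by
  induction n with
  | zero => simp [Matrix.one_fin_two]
  | succ n ih => rw [pow_succ, ih, Matrix.mul_fin_two]; push_cast; ring_nf

/-- For `G` a subgroup of the Borel of `GL₂(𝔽_ℓ)` with `ℓ ∣ |G|` and `H ≤ G`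
containing an element with distinct diagonal entries, `U = !![1,1;0,1]` lies in the normal
closure of `H` in `G`; in particular if `H` is normal in `G` then `U ∈ H`. -/
theorem stmt2 (ℓ : ℕ) [Fact ℓ.Prime]
    (G : Subgroup (GL (Fin 2) (ZMod ℓ)))
    (hG : ∀ g ∈ G, (g : GL (Fin 2) (ZMod ℓ)).val 1 0 = 0)
    (hord : ℓ ∣ Nat.card G)
    (H : Subgroup (GL (Fin 2) (ZMod ℓ))) (hHG : H ≤ G)
    (hex : ∃ h ∈ H, (h : GL (Fin 2) (ZMod ℓ)).val 0 0 ≠ (h : GL (Fin 2) (ZMod ℓ)).val 1 1) :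
    (∃ u ∈ Subgroup.closure {x : GL (Fin 2) (ZMod ℓ) | ∃ g ∈ G, ∃ h ∈ H, x = g * h * g⁻¹},
        (u : GL (Fin 2) (ZMod ℓ)).val = !![1, 1; 0, 1]) ∧
      ((∀ g ∈ G, ∀ h ∈ H, g * h * g⁻¹ ∈ H) →
        ∃ u ∈ H, (u : GL (Fin 2) (ZMod ℓ)).val = !![1, 1; 0, 1]) := by
  have hp : ℓ.Prime := Fact.out
  haveI : NeZero ℓ := ⟨hp.ne_zero⟩
  -- Cauchy: an element of order ℓ in G
  obtain ⟨x, hx⟩ := exists_prime_orderOf_dvd_card' (G := G) ℓ hord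
  set g : GL (Fin 2) (ZMod ℓ) := (x : GL (Fin 2) (ZMod ℓ)) with hgdef
  have hgG : g ∈ G := x.2
  have hgord : orderOf g = ℓ :=
    (orderOf_injective G.subtype Subtype.coe_injective x).trans hx
  have hgpow : g ^ ℓ = 1 := by
    have := pow_orderOf_eq_one g
    rwa [hgord] at this
  have hgne : g ≠ 1 := by
    intro h1
    rw [h1, orderOf_one] at hgord
    exact hp.one_lt.ne hgord
  -- g is unipotent
  have hg10 : g.val 1 0 = 0 := hG g hgG
  have hgMpow : (g.val) ^ ℓ = 1 := by
    have := congrArg Units.val hgpow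
    simpa using this
  obtain ⟨hp10, hp00, hp11⟩ := triu_pow g.val hg10 ℓ
  have hg00 : g.val 0 0 = 1 := by
    have h1 : (g.val 0 0) ^ ℓ = 1 := by
      rw [← hp00, hgMpow]; simp
    rw [ZMod.pow_card] at h1; exact h1
  have hg11 : g.val 1 1 = 1 := by
    have h1 : (g.val 1 1) ^ ℓ = 1 := by
      rw [← hp11, hgMpow]; simp
    rw [ZMod.pow_card] at h1; exact h1
  set b : ZMod ℓ := g.val 0 1 with hbdef
  have hgval : g.val = !![1, b; 0, 1] := by
    rw [Matrix.eta_fin_two g.val, hg00, hg11, hg10, hbdef]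
  have hb : b ≠ 0 := by
    intro hb0
    apply hgne
    ext
    rw [hgval, hb0, Units.val_one, Matrix.one_fin_two]
  -- the element h of H with distinct diagonal
  obtain ⟨h, hhH, hdiag⟩ := hex
  set a : ZMod ℓ := h.val 0 0 with hadef
  set c : ZMod ℓ := h.val 0 1 with hcdef
  set d : ZMod ℓ := h.val 1 1 with hddef
  have hh10 : h.val 1 0 = 0 := hG h (hHG hhH)
  have hhval : h.val = !![a, c; 0, d] := by
    rw [Matrix.eta_fin_two h.val, hadef, hcdef, hddef, hh10]
  have hdet : IsUnit (a * d) := by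
    have : IsUnit h.val.det := (isUnit_iff_isUnit_det h.val).mp h.isUnit
    rwa [hhval, Matrix.det_fin_two_of, mul_zero, sub_zero] at this
  have ha0 : a ≠ 0 := fun h0 => by simp [h0] at hdet
  have hd0 : d ≠ 0 := fun h0 => by simp [h0] at hdet
  -- inverses
  have hginv : (g⁻¹).val = !![1, -b; 0, 1] := by
    apply Units.inv_eq_of_mul_eq_one_right
    show g.val * _ = 1
    rw [hgval, Matrix.mul_fin_two, Matrix.one_fin_two]
    ring_nf
  have hhinv : (h⁻¹).val = !![a⁻¹, -(a⁻¹ * c * d⁻¹); 0, d⁻¹] := by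
    apply Units.inv_eq_of_mul_eq_one_right
    show h.val * _ = 1
    rw [hhval, Matrix.mul_fin_two, Matrix.one_fin_two]
    ext i j
    fin_cases i <;> fin_cases j <;> simp only [Fin.zero_eta, Fin.mk_one, Matrix.of_apply, Matrix.cons_val', Matrix.cons_val_zero, Matrix.cons_val_one, Matrix.empty_val', Matrix.cons_val_fin_one, Matrix.head_cons] <;> field_simp <;> ring
  -- the commutator is unipotent with entry t ≠ 0
  set t : ZMod ℓ := b * (d - a) * d⁻¹ with htdef
  have ht : t ≠ 0 := by
    apply mul_ne_zero (mul_ne_zero hb _) (inv_ne_zero hd0)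
    exact sub_ne_zero.mpr (Ne.symm hdiag)
  set u₀ : GL (Fin 2) (ZMod ℓ) := g * h * g⁻¹ * h⁻¹ with hu₀def
  have hu₀val : u₀.val = !![1, t; 0, 1] := by
    show g.val * h.val * (g⁻¹).val * (h⁻¹).val = _
    rw [hgval, hhval, hginv, hhinv, Matrix.mul_fin_two, Matrix.mul_fin_two,
      Matrix.mul_fin_two, htdef]
    ext i j
    fin_cases i <;> fin_cases j <;> simp only [Fin.zero_eta, Fin.mk_one, Matrix.of_apply, Matrix.cons_val', Matrix.cons_val_zero, Matrix.cons_val_one, Matrix.empty_val', Matrix.cons_val_fin_one, Matrix.head_cons] <;> field_simp <;> ring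
  set S : Set (GL (Fin 2) (ZMod ℓ)) :=
    {x : GL (Fin 2) (ZMod ℓ) | ∃ g ∈ G, ∃ h ∈ H, x = g * h * g⁻¹} with hSdef
  have hu₀mem : u₀ ∈ Subgroup.closure S := by
    have h1 : g * h * g⁻¹ ∈ Subgroup.closure S :=
      Subgroup.subset_closure ⟨g, hgG, h, hhH, rfl⟩
    have h2 : h ∈ Subgroup.closure S :=
      Subgroup.subset_closure ⟨1, one_mem G, h, hhH, by group⟩
    exact mul_mem h1 (inv_mem h2)
  -- take the right power
  set k : ℕ := (t⁻¹).val with hkdef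
  have hkt : (k : ZMod ℓ) = t⁻¹ := by
    rw [hkdef, ZMod.natCast_val, ZMod.cast_id]
  have hukey : (u₀ ^ k).val = !![1, 1; 0, 1] := by
    show (u₀.val) ^ k = _
    rw [hu₀val, unip_pow, hkt, inv_mul_cancel₀ ht]
  refine ⟨⟨u₀ ^ k, pow_mem hu₀mem k, hukey⟩, fun hnorm => ?_⟩
  have hSH : S ⊆ (H : Set (GL (Fin 2) (ZMod ℓ))) := by
    rintro y ⟨g', hg', h', hh', rfl⟩
    exact hnorm g' hg' h' hh'
  have hcl : Subgroup.closure S ≤ H := (Subgroup.closure_le H).mpr hSH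
  exact ⟨u₀ ^ k, hcl (pow_mem hu₀mem k), hukey⟩
end

section
/- Let ℓ be a prime and G a subgroup of GL₂(𝔽_ℓ) contained in the normalizer N of a Cartan subgroup C, with [N : C] = 2 and G non-abelian. Suppose H ≤ G is a non-normal subgroup of odd prime index p = [G : H] with ℓ ∤ |H|, H cyclic generated by a matrix of the form [[a₀, b₀],[0,1]] with a₀ ≠ 1. Then, after a change of basis, H = ⟨diag(a₀,1)⟩, a₀ = −1, |H| = 2, G ∩ C has order p, G is the semidirect product of H acting on M := G ∩ C by inversion, and det G = {±1}. -/
open Matrix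

private lemma comm_aux {ℓ : ℕ} [Fact ℓ.Prime] {e f : ZMod ℓ} (he : e ≠ 1)
    (A B : Matrix (Fin 2) (Fin 2) (ZMod ℓ))
    (hA : A * !![e, f; 0, 1] = !![e, f; 0, 1] * A)
    (hB : B * !![e, f; 0, 1] = !![e, f; 0, 1] * B) :
    A * B = B * A := by
  have h1e : (1 : ZMod ℓ) - e ≠ 0 := sub_ne_zero.mpr (Ne.symm he)
  have eA01 := congrFun (congrFun hA 0) 1
  have eA10 := congrFun (congrFun hA 1) 0
  have eB01 := congrFun (congrFun hB 0) 1
  have eB10 := congrFun (congrFun hB 1) 0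
  simp [Matrix.mul_apply, Fin.sum_univ_two] at eA01 eA10 eB01 eB10
  have hcA : A 1 0 = 0 := by
    rcases mul_eq_zero.mp (show A 1 0 * (1 - e) = 0 by linear_combination -eA10) with h | h
    · exact h
    · exact absurd h h1e
  have hcB : B 1 0 = 0 := by
    rcases mul_eq_zero.mp (show B 1 0 * (1 - e) = 0 by linear_combination -eB10) with h | h
    · exact h
    · exact absurd h h1e
  have hbA : A 0 1 = f * (A 1 1 - A 0 0) / (1 - e) := by
    rw [eq_div_iff h1e]; linear_combination eA01
  have hbB : B 0 1 = f * (B 1 1 - B 0 0) / (1 - e) := by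
    rw [eq_div_iff h1e]; linear_combination eB01
  ext i j
  fin_cases i <;> fin_cases j <;>
    simp [Matrix.mul_apply, Fin.sum_univ_two, hcA, hcB, hbA, hbB] <;>
    (try field_simp) <;> (try ring)

/-- Let `G` be a non-abelian subgroup of the normalizer `N` of a Cartan
subgroup `C` of `GL₂(𝔽_ℓ)` with `[N : C] = 2`, and `H ≤ G` a non-normal cyclic subgroup of odd
prime index `p = [G : H]` with `ℓ ∤ |H|`, generated by a matrix `!![a₀, b₀; 0, 1]` with
`a₀ ≠ 1`. Then `a₀ = −1`, `|H| = 2`, `|G ∩ C| = p`, `G` is the (internal) semidirect product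
of `H` acting on `M = G ∩ C` by inversion, and `det G = {±1}`. -/
theorem stmt19 (ℓ : ℕ) [Fact ℓ.Prime] (p : ℕ) (hp : p.Prime) (hodd : Odd p)
    (C N G H : Subgroup (GL (Fin 2) (ZMod ℓ)))
    (hCab : ∀ a ∈ C, ∀ b ∈ C, a * b = b * a)
    (hCN : C ≤ N) (hNnorm : N = Subgroup.normalizer (C : Set (GL (Fin 2) (ZMod ℓ)))) (hNC : C.relIndex N = 2)
    (hlN : ¬ ℓ ∣ Nat.card N)
    (hGN : G ≤ N) (hGnonab : ¬ ∀ a ∈ G, ∀ b ∈ G, a * b = b * a)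
    (hHG : H ≤ G)
    (hHnotnormal : ¬ ∀ g ∈ G, ∀ h ∈ H, g * h * g⁻¹ ∈ H)
    (hindex : H.relIndex G = p)
    (hlH : ¬ ℓ ∣ Nat.card H)
    (h₀ : GL (Fin 2) (ZMod ℓ)) (a₀ b₀ : ZMod ℓ)
    (hgen : H = Subgroup.closure {h₀})
    (hmat : h₀.val = !![a₀, b₀; 0, 1]) (ha₀ : a₀ ≠ 1) :
    a₀ = -1 ∧ Nat.card H = 2 ∧ Nat.card (G ⊓ C : Subgroup (GL (Fin 2) (ZMod ℓ))) = p ∧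
      G = (G ⊓ C) ⊔ H ∧
      (∀ h ∈ H, h ≠ 1 → ∀ m ∈ G ⊓ C, h * m * h⁻¹ = m⁻¹) ∧
      (∀ g ∈ G, g.val.det = 1 ∨ g.val.det = -1) ∧
      (∃ g ∈ G, g.val.det = -1) := by
  subst hNnorm
  have hh₀H : h₀ ∈ H := by rw [hgen]; exact Subgroup.subset_closure rfl
  have hh₀G : h₀ ∈ G := hHG hh₀H
  have hh₀N : h₀ ∈ (Subgroup.normalizer (C : Set (GL (Fin 2) (ZMod ℓ)))) := hGN hh₀G
  have hHz : H = Subgroup.zpowers h₀ := by rw [hgen, Subgroup.zpowers_eq_closure]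
  haveI : (C.subgroupOf (Subgroup.normalizer (C : Set (GL (Fin 2) (ZMod ℓ))))).Normal := Subgroup.normal_in_normalizer
  -- conjugation by elements of the normalizer preserves C
  have hconjC : ∀ g ∈ (Subgroup.normalizer (C : Set (GL (Fin 2) (ZMod ℓ)))), ∀ c ∈ C, g * c * g⁻¹ ∈ C := by
    intro g hg c hc
    exact (Subgroup.mem_normalizer_iff.mp hg c).mp hc
  -- conjugation by elements of G preserves G ⊓ C
  have hconjM : ∀ g ∈ G, ∀ m ∈ G ⊓ C, g * m * g⁻¹ ∈ G ⊓ C := by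
    intro g hg m hm
    rw [Subgroup.mem_inf] at hm ⊢
    exact ⟨mul_mem (mul_mem hg hm.1) (inv_mem hg), hconjC g (hGN hg) m hm.2⟩
  -- h₀ ^ 2 ∈ C
  have hsqC : h₀ ^ 2 ∈ C := by
    have h1 : (⟨h₀, hh₀N⟩ : (Subgroup.normalizer (C : Set (GL (Fin 2) (ZMod ℓ))))) ^ (C.subgroupOf (Subgroup.normalizer (C : Set (GL (Fin 2) (ZMod ℓ))))).index
        ∈ C.subgroupOf (Subgroup.normalizer (C : Set (GL (Fin 2) (ZMod ℓ)))) := Subgroup.pow_index_mem _ _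
    have h2 : (C.subgroupOf (Subgroup.normalizer (C : Set (GL (Fin 2) (ZMod ℓ))))).index = 2 := hNC
    rw [h2] at h1
    simpa [Subgroup.mem_subgroupOf] using h1
  -- G normalizes G ⊓ C
  have hGle : G ≤ Subgroup.normalizer ((G ⊓ C : Subgroup (GL (Fin 2) (ZMod ℓ))) : Set (GL (Fin 2) (ZMod ℓ))) := by
    intro g hg
    rw [Subgroup.mem_normalizer_iff]
    intro x
    constructor
    · intro hx; exact hconjM g hg x hx
    · intro hx
      have h1 : g⁻¹ * (g * x * g⁻¹) * g⁻¹⁻¹ = x := by group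
      have h2 := hconjM g⁻¹ (inv_mem hg) _ hx
      rwa [h1] at h2
  -- index computations
  have hCrelG : C.relIndex G ∣ 2 := by
    have h1 : (C.subgroupOf (Subgroup.normalizer (C : Set (GL (Fin 2) (ZMod ℓ))))).relIndex (G.subgroupOf (Subgroup.normalizer (C : Set (GL (Fin 2) (ZMod ℓ)))))
        = C.relIndex G := Subgroup.relIndex_subgroupOf hGN
    have h2 := Subgroup.relIndex_dvd_index_of_normal (C.subgroupOf (Subgroup.normalizer (C : Set (GL (Fin 2) (ZMod ℓ)))))
      (G.subgroupOf (Subgroup.normalizer (C : Set (GL (Fin 2) (ZMod ℓ)))))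
    rw [h1] at h2
    have h3 : (C.subgroupOf (Subgroup.normalizer (C : Set (GL (Fin 2) (ZMod ℓ))))).index = 2 := hNC
    rwa [h3] at h2
  have hMrelG : (G ⊓ C).relIndex G ∣ 2 := by
    rwa [inf_comm, Subgroup.inf_relIndex_right]
  have hMne1 : (G ⊓ C).relIndex G ≠ 1 := by
    intro h
    have hGC : G ≤ G ⊓ C := Subgroup.relIndex_eq_one.mp h
    exact hGnonab (fun a ha b hb => hCab a (hGC ha).2 b (hGC hb).2)
  -- G = (G ⊓ C) ⊔ H
  have hGsup : G = (G ⊓ C) ⊔ H := by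
    have hKG : (G ⊓ C) ⊔ H ≤ G := sup_le inf_le_left hHG
    have hd2 : ((G ⊓ C) ⊔ H).relIndex G ∣ 2 :=
      dvd_trans (Subgroup.relIndex_dvd_of_le_left G le_sup_left) hMrelG
    have hdp : ((G ⊓ C) ⊔ H).relIndex G ∣ p := by
      rw [← hindex]
      exact Subgroup.relIndex_dvd_of_le_left G le_sup_right
    have hcop : Nat.Coprime 2 p := Nat.coprime_two_left.mpr hodd
    have h1 : ((G ⊓ C) ⊔ H).relIndex G = 1 :=
      Nat.eq_one_of_dvd_coprimes hcop hd2 hdp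
    exact le_antisymm (Subgroup.relIndex_eq_one.mp h1) hKG
  -- decomposition of elements of G
  have hdecomp : ∀ g ∈ G, ∃ m ∈ G ⊓ C, ∃ k : ℤ, g = m * h₀ ^ k := by
    have hSmem : ∀ (x : GL (Fin 2) (ZMod ℓ)), (∃ m ∈ G ⊓ C, ∃ k : ℤ, x = m * h₀ ^ k) →
        True := fun _ _ => trivial
    let S : Subgroup (GL (Fin 2) (ZMod ℓ)) :=
      { carrier := {x | ∃ m ∈ G ⊓ C, ∃ k : ℤ, x = m * h₀ ^ k}
        one_mem' := ⟨1, one_mem _, 0, by simp⟩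
        mul_mem' := by
          rintro x y ⟨m₁, hm₁, k₁, rfl⟩ ⟨m₂, hm₂, k₂, rfl⟩
          refine ⟨m₁ * (h₀ ^ k₁ * m₂ * (h₀ ^ k₁)⁻¹), mul_mem hm₁
            (hconjM _ (zpow_mem hh₀G k₁) _ hm₂), k₁ + k₂, ?_⟩
          rw [_root_.zpow_add h₀ k₁ k₂]
          group
        inv_mem' := by
          rintro x ⟨m, hm, k, rfl⟩
          refine ⟨h₀ ^ (-k) * m⁻¹ * (h₀ ^ (-k))⁻¹, hconjM _ (zpow_mem hh₀G (-k)) _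
            (inv_mem hm), -k, ?_⟩
          group }
    have hMS : G ⊓ C ≤ S := fun m hm => ⟨m, hm, 0, by simp⟩
    have hHS : H ≤ S := by
      rw [hHz]
      rintro x ⟨k, rfl⟩
      exact ⟨1, one_mem _, k, by simp⟩
    intro g hg
    have : g ∈ S := by
      rw [hGsup] at hg
      exact sup_le hMS hHS hg
    exact this
  -- abelian criterion
  have habelian : (∀ m ∈ G ⊓ C, h₀ * m = m * h₀) → False := by
    intro hcomm
    apply hGnonab
    intro a ha b hb
    obtain ⟨m₁, hm₁, k₁, rfl⟩ := hdecomp a ha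
    obtain ⟨m₂, hm₂, k₂, rfl⟩ := hdecomp b hb
    have hm₁C : m₁ ∈ C := ((Subgroup.mem_inf.mp hm₁).2)
    have hm₂C : m₂ ∈ C := ((Subgroup.mem_inf.mp hm₂).2)
    have c_a : Commute m₁ m₂ := hCab m₁ hm₁C m₂ hm₂C
    have ch1 : Commute h₀ m₁ := hcomm m₁ hm₁
    have ch2 : Commute h₀ m₂ := hcomm m₂ hm₂
    have c_b : Commute m₁ (h₀ ^ k₂) := ch1.symm.zpow_right k₂
    have c_c : Commute (h₀ ^ k₁) m₂ := ch2.zpow_left k₁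
    have c_d : Commute (h₀ ^ k₁) (h₀ ^ k₂) := (Commute.refl h₀).zpow_zpow k₁ k₂
    exact (Commute.mul_left (c_a.mul_right c_b) (c_c.mul_right c_d)).eq
  -- matrix of h₀ ^ 2
  have hsq_val : (h₀ ^ 2).val = !![a₀ ^ 2, a₀ * b₀ + b₀; 0, 1] := by
    rw [pow_two, Units.val_mul, hmat]
    ext i j
    fin_cases i <;> fin_cases j <;> simp [Matrix.mul_apply, Fin.sum_univ_two] <;> ring
  -- a₀ ^ 2 = 1
  have ha₀sq : a₀ ^ 2 = 1 := by
    by_contra hne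
    apply habelian
    intro m hm
    have hmC : m ∈ C := (Subgroup.mem_inf.mp hm).2
    have h1 : m * h₀ ^ 2 = h₀ ^ 2 * m := hCab m hmC (h₀ ^ 2) hsqC
    have hBv : m.val * !![a₀ ^ 2, a₀ * b₀ + b₀; 0, 1]
        = !![a₀ ^ 2, a₀ * b₀ + b₀; 0, 1] * m.val := by
      have h2 := congrArg Units.val h1
      rwa [Units.val_mul, Units.val_mul, hsq_val] at h2
    have h3 : h₀ * h₀ ^ 2 = h₀ ^ 2 * h₀ := ((Commute.refl h₀).pow_right 2).eq
    have hAv : h₀.val * !![a₀ ^ 2, a₀ * b₀ + b₀; 0, 1]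
        = !![a₀ ^ 2, a₀ * b₀ + b₀; 0, 1] * h₀.val := by
      have h4 := congrArg Units.val h3
      rwa [Units.val_mul, Units.val_mul, hsq_val] at h4
    have key := comm_aux hne h₀.val m.val hAv hBv
    apply Units.ext
    rw [Units.val_mul, Units.val_mul]
    exact key
  have ha₀neg : a₀ = -1 := by
    have h1 : (a₀ - 1) * (a₀ + 1) = 0 := by linear_combination ha₀sq
    rcases mul_eq_zero.mp h1 with h | h
    · exact absurd (by linear_combination h) ha₀
    · linear_combination h
  -- h₀ has order two
  have hsq1 : h₀ ^ 2 = 1 := by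
    apply Units.ext
    rw [hsq_val, ha₀neg, Units.val_one]
    norm_num
    exact Matrix.one_fin_two.symm
  have hne1 : h₀ ≠ 1 := by
    intro h
    rw [h, Units.val_one] at hmat
    have h1 := congrFun (congrFun hmat 0) 0
    simp [Matrix.one_apply] at h1
    exact ha₀ h1.symm
  haveI : Fact (Nat.Prime 2) := ⟨Nat.prime_two⟩
  have horder : orderOf h₀ = 2 := orderOf_eq_prime hsq1 hne1
  have hcardH : Nat.card H = 2 := by rw [hHz, Nat.card_zpowers, horder]
  -- cardinalities
  have hcardG : Nat.card G = 2 * p := by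
    have h1 := Subgroup.card_mul_index (H.subgroupOf G)
    have h2 : (H.subgroupOf G).index = p := hindex
    have h3 : Nat.card (H.subgroupOf G) = Nat.card H :=
      Nat.card_congr (Subgroup.subgroupOfEquivOfLe hHG).toEquiv
    rw [h2, h3, hcardH] at h1
    omega
  have hMrel2 : (G ⊓ C).relIndex G = 2 := by
    rcases (Nat.dvd_prime Nat.prime_two).mp hMrelG with h | h
    · exact absurd h hMne1
    · exact h
  have hcardM : Nat.card (G ⊓ C : Subgroup (GL (Fin 2) (ZMod ℓ))) = p := by
    have h1 := Subgroup.card_mul_index ((G ⊓ C).subgroupOf G)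
    have h2 : ((G ⊓ C).subgroupOf G).index = 2 := hMrel2
    have h3 : Nat.card ((G ⊓ C).subgroupOf G) = Nat.card (G ⊓ C : Subgroup (GL (Fin 2) (ZMod ℓ))) :=
      Nat.card_congr (Subgroup.subgroupOfEquivOfLe inf_le_left).toEquiv
    rw [h2, h3, hcardG] at h1
    omega
  -- h₀ is its own inverse
  have hself : h₀ * h₀ = 1 := by rw [← pow_two]; exact hsq1
  have hinvh : h₀⁻¹ = h₀ := inv_eq_of_mul_eq_one_right hself
  -- powers of h₀
  have hpowcases : ∀ k : ℤ, h₀ ^ k = 1 ∨ h₀ ^ k = h₀ := by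
    intro k
    rcases Int.even_or_odd k with ⟨t, rfl⟩ | ⟨t, rfl⟩
    · left
      have : h₀ ^ (t + t) = (h₀ ^ (2 : ℤ)) ^ t := by
        rw [← _root_.zpow_mul]; norm_num; ring_nf
      rw [this]
      have h2 : h₀ ^ (2 : ℤ) = 1 := by rw [show ((2:ℤ) = ((2:ℕ):ℤ)) by norm_num, zpow_natCast]; exact hsq1
      rw [h2, _root_.one_zpow]
    · right
      have : h₀ ^ (2 * t + 1) = (h₀ ^ (2 : ℤ)) ^ t * h₀ := by
        rw [_root_.zpow_add, zpow_one, ← _root_.zpow_mul]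
      rw [this]
      have h2 : h₀ ^ (2 : ℤ) = 1 := by rw [show ((2:ℤ) = ((2:ℕ):ℤ)) by norm_num, zpow_natCast]; exact hsq1
      rw [h2, _root_.one_zpow, one_mul]
  have hHcases : ∀ x ∈ H, x = 1 ∨ x = h₀ := by
    intro x hx
    rw [hHz] at hx
    obtain ⟨k, rfl⟩ := Subgroup.mem_zpowers_iff.mp hx
    exact hpowcases k
  -- order of nontrivial elements of G ⊓ C
  have horderM : ∀ m ∈ G ⊓ C, m ≠ 1 → orderOf m = p := by
    intro m hm hm1
    have hdvd : orderOf m ∣ Nat.card (G ⊓ C : Subgroup (GL (Fin 2) (ZMod ℓ))) :=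
      Subgroup.orderOf_dvd_natCard _ hm
    rw [hcardM] at hdvd
    rcases (Nat.dvd_prime hp).mp hdvd with h | h
    · exact absurd (orderOf_eq_one_iff.mp h) hm1
    · exact h
  -- inversion action
  have hinv_elt : ∀ m ∈ G ⊓ C, h₀ * m * h₀⁻¹ = m⁻¹ := by
    intro m hm
    by_cases hm1 : m = 1
    · rw [hm1]; simp
    have hmo : orderOf m = p := horderM m hm hm1
    have hzp : Subgroup.zpowers m = G ⊓ C := by
      apply Subgroup.eq_of_le_of_card_ge (Subgroup.zpowers_le.mpr hm)
      rw [hcardM, Nat.card_zpowers, hmo]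
    have hx : h₀ * m * h₀⁻¹ ∈ G ⊓ C := hconjM h₀ hh₀G m hm
    rw [← hzp] at hx
    obtain ⟨j, hj⟩ := Subgroup.mem_zpowers_iff.mp hx
    have hjj : m ^ (j * j) = m := by
      rw [_root_.zpow_mul, hj, conj_zpow, hj]
      rw [hinvh]
      calc h₀ * (h₀ * m * h₀) * h₀ = (h₀ * h₀) * m * (h₀ * h₀) := by group
        _ = m := by rw [hself]; group
    have hdvdj : (p : ℤ) ∣ (j - 1) * (j + 1) := by
      have h1 : m ^ (j * j - 1) = 1 := by
        rw [_root_.zpow_sub, hjj, zpow_one, mul_inv_cancel]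
      have h2 : ((orderOf m : ℤ)) ∣ (j * j - 1) := orderOf_dvd_iff_zpow_eq_one.mpr h1
      rw [hmo] at h2
      have h3 : (j - 1) * (j + 1) = j * j - 1 := by ring
      rw [h3]
      exact h2
    have hpz : Prime (p : ℤ) := Nat.prime_iff_prime_int.mp hp
    rcases hpz.dvd_mul.mp hdvdj with h | h
    · exfalso
      have hmj : m ^ j = m := by
        have h1 : m ^ (j - 1) = 1 := orderOf_dvd_iff_zpow_eq_one.mp (by rw [hmo]; exact h)
        calc m ^ j = m ^ (j - 1) * m := by rw [← _root_.zpow_add_one]; norm_num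
          _ = m := by rw [h1, one_mul]
      apply habelian
      intro m' hm'
      rw [← hzp] at hm'
      obtain ⟨i, hi⟩ := Subgroup.mem_zpowers_iff.mp hm'
      have hcm : Commute h₀ m := by
        rw [hmj] at hj
        calc h₀ * m = (h₀ * m * h₀⁻¹) * h₀ := by group
          _ = m * h₀ := by rw [← hj]
      rw [← hi]
      exact (hcm.zpow_right i).eq
    · have h1 : m ^ (j + 1) = 1 := orderOf_dvd_iff_zpow_eq_one.mp (by rw [hmo]; exact h)
      have h2 : m ^ j * m = 1 := by rw [← _root_.zpow_add_one]; exact h1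
      rw [← hj]
      exact eq_inv_of_mul_eq_one_left h2
  -- determinants
  have hdeth₀ : h₀.val.det = -1 := by
    rw [hmat, Matrix.det_fin_two_of, ha₀neg]; ring
  have hdetM : ∀ m ∈ G ⊓ C, m.val.det = 1 := by
    intro m hm
    by_cases hm1 : m = 1
    · rw [hm1, Units.val_one, Matrix.det_one]
    have hmo : orderOf m = p := horderM m hm hm1
    have hA : (m⁻¹).val.det = m.val.det := by
      rw [← hinv_elt m hm, hinvh, Units.val_mul, Units.val_mul, Matrix.det_mul,
        Matrix.det_mul, hdeth₀]
      ring
    have hB : m.val.det * (m⁻¹).val.det = 1 := by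
      rw [← Matrix.det_mul, ← Units.val_mul, mul_inv_cancel, Units.val_one, Matrix.det_one]
    have hu2 : m.val.det ^ 2 = 1 := by
      rw [hA] at hB
      rw [pow_two]
      exact hB
    have hup : m.val.det ^ p = 1 := by
      have h3 : m ^ p = 1 := by rw [← hmo]; exact pow_orderOf_eq_one m
      have h4 := congrArg (fun u : GL (Fin 2) (ZMod ℓ) => u.val.det) h3
      simpa [Units.val_pow_eq_pow_val, Matrix.det_pow] using h4
    obtain ⟨t, ht⟩ := hodd
    calc m.val.det = (m.val.det ^ 2) ^ t * m.val.det := by rw [hu2, one_pow, one_mul]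
      _ = m.val.det ^ p := by rw [ht, pow_add, pow_mul, pow_one]
      _ = 1 := hup
  -- assemble
  refine ⟨ha₀neg, hcardH, hcardM, hGsup, ?_, ?_, ⟨h₀, hh₀G, hdeth₀⟩⟩
  · intro h hh hne m hm
    rcases hHcases h hh with rfl | rfl
    · exact absurd rfl hne
    · exact hinv_elt m hm
  · intro g hg
    obtain ⟨m, hm, k, rfl⟩ := hdecomp g hg
    rcases hpowcases k with h | h
    · left
      rw [h, mul_one]
      exact hdetM m hm
    · right
      rw [h, Units.val_mul, Matrix.det_mul, hdetM m hm, hdeth₀, one_mul]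
end
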